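/- arXiv:2509.08641 — 2 statements merged into one kernel-verified Lean document; each statement's English description precedes it below -/
import Mathlib

section
/- Let Ψ : [0,∞) → [0,∞) be a homeomorphism with doubling constant C_Ψ (i.e. Ψ(2r) ≤ C_Ψ Ψ(r) for all r > 0), and suppose there are constants C₁ > 0 and r₁ > 0 such that (R/r)^p ≤ C₁ · Ψ(R)/Ψ(r) for all 0 < r ≤ R < r₁, and suppose limsup_{r→0} Ψ(r)/r^p > 0. Then there exists C > 0 such that (1/C) r^p ≤ Ψ(r) ≤ C r^p for all r ∈ (0, r₁). -/
/-- If Ψ : [0,∞) → [0,∞) is a homeomorphism (strictly increasing,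
continuous, Ψ(0)=0) with doubling constant C_Ψ, satisfying the reverse
comparison (R/r)^p ≤ C₁ Ψ(R)/Ψ(r) for 0 < r ≤ R < r₁, and
limsup_{r→0} Ψ(r)/r^p > 0, then Ψ(r) ≍ r^p on (0, r₁). -/
theorem stmt_0 (Ψ : ℝ → ℝ) (p : ℝ) (hp : 1 < p)
    (hΨ0 : Ψ 0 = 0)
    (hΨmono : StrictMonoOn Ψ (Set.Ici 0))
    (hΨcont : ContinuousOn Ψ (Set.Ici 0))
    (C_Ψ : ℝ) (hC_Ψ : 1 < C_Ψ)
    (hdoubling : ∀ r : ℝ, 0 < r → Ψ (2 * r) ≤ C_Ψ * Ψ r)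
    (C₁ r₁ : ℝ) (hC₁ : 0 < C₁) (hr₁ : 0 < r₁)
    (hcomp : ∀ r R : ℝ, 0 < r → r ≤ R → R < r₁ → (R / r) ^ p ≤ C₁ * (Ψ R / Ψ r))
    (hlimsup : ∃ ε : ℝ, 0 < ε ∧ ∀ δ : ℝ, 0 < δ → ∃ r : ℝ, 0 < r ∧ r < δ ∧ ε ≤ Ψ r / r ^ p) :
    ∃ C : ℝ, 0 < C ∧ ∀ r : ℝ, 0 < r → r < r₁ →
      r ^ p / C ≤ Ψ r ∧ Ψ r ≤ C * r ^ p := by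
  obtain ⟨ε, hε, hseq⟩ := hlimsup
  have hΨpos : ∀ x : ℝ, 0 < x → 0 < Ψ x := by
    intro x hx
    have := hΨmono (Set.mem_Ici.2 le_rfl) (Set.mem_Ici.2 hx.le) hx
    rwa [hΨ0] at this
  have hΨr₁ : 0 < Ψ r₁ := hΨpos r₁ hr₁
  have hhalf : (0:ℝ) < (r₁ / 2) ^ p := Real.rpow_pos_of_pos (by linarith) p
  set A := C₁ * Ψ r₁ / (r₁ / 2) ^ p with hA
  have hApos : 0 < A := by positivity
  set B := C₁ / ε with hB
  have hBpos : 0 < B := by positivity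
  refine ⟨max A B, lt_max_iff.2 (Or.inl hApos), ?_⟩
  intro r hr hrr₁
  have hΨr : 0 < Ψ r := hΨpos r hr
  have hrp : 0 < r ^ p := Real.rpow_pos_of_pos hr p
  constructor
  · -- lower bound
    obtain ⟨s, hs, hsr, hεs⟩ := hseq r hr
    have hΨs : 0 < Ψ s := hΨpos s hs
    have hsp : 0 < s ^ p := Real.rpow_pos_of_pos hs p
    have h1 := hcomp s r hs hsr.le hrr₁
    have h2 : r ^ p / s ^ p ≤ C₁ * (Ψ r / Ψ s) := by
      rwa [Real.div_rpow hr.le hs.le] at h1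
    have hεs' : ε * s ^ p ≤ Ψ s := (le_div_iff₀ hsp).1 hεs
    have h3 : r ^ p * Ψ s ≤ C₁ * Ψ r * s ^ p := by
      rw [div_le_iff₀ hsp] at h2
      calc r ^ p * Ψ s = (r ^ p) * Ψ s := rfl
        _ ≤ (C₁ * (Ψ r / Ψ s) * s ^ p) * Ψ s := by
            exact mul_le_mul_of_nonneg_right h2 hΨs.le
        _ = C₁ * Ψ r * s ^ p := by field_simp
    have h4 : ε * r ^ p ≤ C₁ * Ψ r := by
      have h5 : r ^ p * (ε * s ^ p) ≤ C₁ * Ψ r * s ^ p := by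
        calc r ^ p * (ε * s ^ p) ≤ r ^ p * Ψ s :=
              mul_le_mul_of_nonneg_left hεs' hrp.le
          _ ≤ C₁ * Ψ r * s ^ p := h3
      have := (mul_le_mul_iff_of_pos_right hsp).1 (by linarith [h5] : ε * r ^ p * s ^ p ≤ C₁ * Ψ r * s ^ p)
      linarith
    have hBle : r ^ p / B ≤ Ψ r := by
      rw [hB, div_div_eq_mul_div, div_le_iff₀ hC₁]
      calc r ^ p * ε = ε * r ^ p := by ring
        _ ≤ C₁ * Ψ r := h4
        _ = Ψ r * C₁ := by ring
    calc r ^ p / max A B ≤ r ^ p / B :=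
          div_le_div_of_nonneg_left hrp.le hBpos (le_max_right A B)
      _ ≤ Ψ r := hBle
  · -- upper bound
    set R := (r + r₁) / 2 with hRdef
    have hrR : r ≤ R := by rw [hRdef]; linarith
    have hRr₁ : R < r₁ := by rw [hRdef]; linarith
    have hRhalf : r₁ / 2 ≤ R := by rw [hRdef]; linarith
    have hRpos : 0 < R := lt_of_lt_of_le hr hrR
    have h1 := hcomp r R hr hrR hRr₁
    have h2 : R ^ p / r ^ p ≤ C₁ * (Ψ R / Ψ r) := by
      rwa [Real.div_rpow hRpos.le hr.le] at h1
    have hΨR : Ψ R ≤ Ψ r₁ := (hΨmono.monotoneOn) (Set.mem_Ici.2 hRpos.le)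
      (Set.mem_Ici.2 hr₁.le) hRr₁.le
    have hRp : (r₁ / 2) ^ p ≤ R ^ p :=
      Real.rpow_le_rpow (by linarith) hRhalf (by linarith)
    have h3 : Ψ r * R ^ p ≤ C₁ * Ψ R * r ^ p := by
      rw [div_le_iff₀ hrp] at h2
      calc Ψ r * R ^ p ≤ Ψ r * (C₁ * (Ψ R / Ψ r) * r ^ p) :=
            mul_le_mul_of_nonneg_left h2 hΨr.le
        _ = C₁ * Ψ R * r ^ p := by field_simp
    have h4 : Ψ r * (r₁ / 2) ^ p ≤ C₁ * Ψ r₁ * r ^ p := by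
      calc Ψ r * (r₁ / 2) ^ p ≤ Ψ r * R ^ p :=
            mul_le_mul_of_nonneg_left hRp hΨr.le
        _ ≤ C₁ * Ψ R * r ^ p := h3
        _ ≤ C₁ * Ψ r₁ * r ^ p := by
            apply mul_le_mul_of_nonneg_right _ hrp.le
            exact mul_le_mul_of_nonneg_left hΨR hC₁.le
    have hAle : Ψ r ≤ A * r ^ p := by
      rw [hA, div_mul_eq_mul_div, le_div_iff₀ hhalf]
      linarith
    calc Ψ r ≤ A * r ^ p := hAle
      _ ≤ max A B * r ^ p := mul_le_mul_of_nonneg_right (le_max_left A B) hrp.le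
end

section
/- Let m and ν be Radon measures on a metric space (X,d) with m volume doubling, all closed balls compact. Write the Lebesgue decomposition m = m_a + m_s with m_a ≪ ν and m_s ⊥ ν. Suppose there exist C > 0 and R > 0 such that m(B(x,r)) ≤ C·m_a(B(x,r)) for all x ∈ X and r ∈ (0,R). Then m_s = 0, i.e. m ≪ ν. -/
open Metric MeasureTheory
open scoped NNReal ENNReal

/-- For a volume doubling Radon measure m on a proper metric
space and a measure ν, writing m = m_a + m_s for the Lebesgue decomposition of
m w.r.t. ν, if m(B(x,r)) ≤ C·m_a(B(x,r)) for all small radii, then the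
singular part vanishes and m ≪ ν. -/
theorem stmt_12 {X : Type*} [MetricSpace X] [ProperSpace X]
    [TopologicalSpace.SeparableSpace X]
    [MeasurableSpace X] [BorelSpace X]
    (m ν : Measure X) [m.Regular] [SigmaFinite ν]
    [m.HaveLebesgueDecomposition ν]
    (hpos : ∀ (x : X) (r : ℝ), 0 < r → 0 < m (ball x r))
    (hfin : ∀ (x : X) (r : ℝ), 0 < r → m (ball x r) < ⊤)
    (C_VD : ℝ≥0) (hC_VD : 1 ≤ C_VD)
    (hdoubling : ∀ (x : X) (r : ℝ), 0 < r →
      m (ball x (2 * r)) ≤ (C_VD : ℝ≥0∞) * m (ball x r))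
    (C : ℝ≥0) (hC : 0 < C) (R : ℝ) (hR : 0 < R)
    (hcomp : ∀ (x : X) (r : ℝ), 0 < r → r < R →
      m (ball x r) ≤ (C : ℝ≥0∞) * (ν.withDensity (m.rnDeriv ν)) (ball x r)) :
    m.singularPart ν = 0 ∧ m ≪ ν := by
  set ρ : Measure X := ν.withDensity (m.rnDeriv ν) with hρdef
  -- basic instances
  haveI : SecondCountableTopology X := UniformSpace.secondCountable_of_separable X
  have hdec : m = m.singularPart ν + ρ := (m.haveLebesgueDecomposition_add ν)
  have hρ_le : ρ ≤ m := by
    conv_rhs => rw [hdec]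
    exact Measure.le_add_left le_rfl
  haveI : IsLocallyFiniteMeasure m := inferInstance
  haveI : IsLocallyFiniteMeasure ρ := Measure.isLocallyFiniteMeasure_of_le hρ_le
  haveI : SigmaFinite m := inferInstance
  haveI : SigmaFinite ρ := inferInstance
  have hρac : ρ ≪ m := Measure.absolutelyContinuous_of_le hρ_le
  -- uniformly locally doubling
  haveI : IsUnifLocDoublingMeasure m := by
    refine ⟨⟨C_VD ^ 2, Filter.eventually_of_mem self_mem_nhdsWithin fun ε hε x => ?_⟩⟩
    have hε0 : (0 : ℝ) < ε := hε
    have h1 : closedBall x (2 * ε) ⊆ ball x (2 * (2 * ε)) :=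
      closedBall_subset_ball (by linarith)
    have h2 : ball x ε ⊆ closedBall x ε := ball_subset_closedBall
    calc m (closedBall x (2 * ε)) ≤ m (ball x (2 * (2 * ε))) := measure_mono h1
      _ ≤ (C_VD : ℝ≥0∞) * m (ball x (2 * ε)) := hdoubling x (2 * ε) (by linarith)
      _ ≤ (C_VD : ℝ≥0∞) * ((C_VD : ℝ≥0∞) * m (ball x ε)) :=
          mul_le_mul_right (hdoubling x ε hε0) _
      _ = ((C_VD ^ 2 : ℝ≥0) : ℝ≥0∞) * m (ball x ε) := by
          push_cast; ring
      _ ≤ ((C_VD ^ 2 : ℝ≥0) : ℝ≥0∞) * m (closedBall x ε) :=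
          mul_le_mul_right (measure_mono h2) _
  -- the key constant
  set k : ℝ≥0∞ := ((C_VD : ℝ≥0∞) * C)⁻¹ with hk
  have hk_ne : ((C_VD : ℝ≥0∞) * C) ≠ 0 := by
    simp only [ne_eq, mul_eq_zero, ENNReal.coe_eq_zero, not_or]
    exact ⟨by positivity, hC.ne'⟩
  have hk_top : ((C_VD : ℝ≥0∞) * C) ≠ ⊤ := by
    exact ENNReal.mul_ne_top ENNReal.coe_ne_top ENNReal.coe_ne_top
  have hk_pos : 0 < k := by
    simp [hk, ENNReal.inv_pos, hk_top]
  -- pointwise lower bound on ratios for small closed balls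
  have hratio : ∀ (x : X) (r : ℝ), 0 < r → r < R →
      k ≤ ρ (closedBall x r) / m (closedBall x r) := by
    intro x r hr hrR
    have h1 : closedBall x r ⊆ ball x (2 * r) := closedBall_subset_ball (by linarith)
    have hub : m (closedBall x r) ≤ ((C_VD : ℝ≥0∞) * C) * ρ (closedBall x r) := by
      calc m (closedBall x r) ≤ m (ball x (2 * r)) := measure_mono h1
        _ ≤ (C_VD : ℝ≥0∞) * m (ball x r) := hdoubling x r hr
        _ ≤ (C_VD : ℝ≥0∞) * ((C : ℝ≥0∞) * ρ (ball x r)) :=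
            mul_le_mul_right (hcomp x r hr hrR) _
        _ = ((C_VD : ℝ≥0∞) * C) * ρ (ball x r) := by ring
        _ ≤ ((C_VD : ℝ≥0∞) * C) * ρ (closedBall x r) :=
            mul_le_mul_right (measure_mono ball_subset_closedBall) _
    have hm_ne : m (closedBall x r) ≠ 0 :=
      ((hpos x r hr).trans_le (measure_mono ball_subset_closedBall)).ne'
    have hm_top : m (closedBall x r) ≠ ⊤ :=
      ((measure_mono h1).trans_lt (hfin x (2 * r) (by linarith))).ne
    rw [ENNReal.le_div_iff_mul_le (Or.inl hm_ne) (Or.inl hm_top), hk,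
      ← ENNReal.div_eq_inv_mul, ENNReal.div_le_iff hk_ne hk_top]
    calc m (closedBall x r) ≤ ((C_VD : ℝ≥0∞) * C) * ρ (closedBall x r) := hub
      _ = ρ (closedBall x r) * ((C_VD : ℝ≥0∞) * C) := mul_comm _ _
  -- differentiation: rnDeriv ρ m ≥ k a.e.
  have hderiv : ∀ᵐ x ∂m, k ≤ ρ.rnDeriv m x := by
    filter_upwards [VitaliFamily.ae_tendsto_rnDeriv
      (IsUnifLocDoublingMeasure.vitaliFamily m 1) ρ] with x hx
    have htends : Filter.Tendsto (fun r : ℝ => ρ (closedBall x r) / m (closedBall x r))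
        (nhdsWithin 0 (Set.Ioi 0)) (nhds (ρ.rnDeriv m x)) := by
      refine hx.comp (IsUnifLocDoublingMeasure.tendsto_closedBall_filterAt m
        (fun _ => x) (fun r => r) Filter.tendsto_id ?_)
      refine Filter.eventually_of_mem self_mem_nhdsWithin fun r hr => ?_
      have : (0:ℝ) < r := hr
      simp [mem_closedBall, this.le]
    refine ge_of_tendsto htends ?_
    filter_upwards [Ioo_mem_nhdsGT_of_mem ⟨le_rfl, hR⟩] with r hr
    exact hratio x r hr.1 hr.2
  -- singular set
  obtain ⟨S, hSmeas, hS1, hS2⟩ := m.mutuallySingular_singularPart ν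
  have hρSc : ρ Sᶜ = 0 := by
    rw [hρdef, withDensity_apply _ hSmeas.compl]
    exact setLIntegral_measure_zero _ _ hS2
  -- m Sᶜ = 0
  have hmSc : m Sᶜ = 0 := by
    have h1 : ρ Sᶜ = ∫⁻ x in Sᶜ, ρ.rnDeriv m x ∂m := by
      conv_lhs => rw [← Measure.withDensity_rnDeriv_eq ρ m hρac]
      rw [withDensity_apply _ hSmeas.compl]
    have h2 : k * m Sᶜ ≤ ∫⁻ x in Sᶜ, ρ.rnDeriv m x ∂m := by
      rw [← setLIntegral_const Sᶜ k]
      exact setLIntegral_mono_ae' hSmeas.compl (hderiv.mono fun x hx _ => hx)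
    rw [← h1, hρSc, nonpos_iff_eq_zero, mul_eq_zero] at h2
    exact h2.resolve_left hk_pos.ne'
  have hsp : m.singularPart ν = 0 := by
    have hle : m.singularPart ν ≤ m := m.singularPart_le ν
    rw [← Measure.measure_univ_eq_zero, ← Set.union_compl_self S, measure_union_null_iff]
    exact ⟨hS1, le_antisymm ((hle Sᶜ).trans hmSc.le) zero_le⟩
  exact ⟨hsp, (Measure.singularPart_eq_zero m ν).mp hsp⟩
end
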